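/- Let (X, 𝒜) be a measurable space. The following are equivalent: (1) (X, 𝒜) is a compact measurable space; (2) every proper ideal of the ring M(X) is fixed; (3) every maximal ideal of M(X) is fixed; (4) every Z_𝒜-filter on X has nonempty intersection; (5) every Z_𝒜-ultrafilter on X has nonempty intersection. -/

import Mathlib

open Set






/-- The ring of all real-valued measurable functions on a measurable space `X`,
as a subring of the pointwise ring `X → ℝ`. -/
def Mring (X : Type*) [MeasurableSpace X] : Subring (X → ℝ) where
  carrier := {f | Measurable f}
  mul_mem' hf hg := hf.mul hg
  one_mem' := measurable_one
  add_mem' hf hg := hf.add hg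
  zero_mem' := measurable_zero
  neg_mem' hf := hf.neg

/-- The zero-set of a measurable function. -/
def zset {X : Type*} [MeasurableSpace X] (f : Mring X) : Set X :=
  {x | (f : X → ℝ) x = 0}

/-- The cozero-set of a measurable function. -/
def coz {X : Type*} [MeasurableSpace X] (f : Mring X) : Set X :=
  {x | (f : X → ℝ) x ≠ 0}

/-- A `Z_𝒜`-filter on `X`: a proper filter of the lattice of measurable sets,
i.e. a nonempty collection of measurable sets not containing `∅`, closed under
binary intersections, and containing every measurable superset of each member. -/
def IsZFilter {X : Type*} [MeasurableSpace X] (F : Set (Set X)) : Prop :=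
  F.Nonempty ∧ (∀ A ∈ F, MeasurableSet A) ∧ ∅ ∉ F ∧
    (∀ A ∈ F, ∀ B ∈ F, A ∩ B ∈ F) ∧
    (∀ A ∈ F, ∀ B : Set X, MeasurableSet B → A ⊆ B → B ∈ F)

/-- A `Z_𝒜`-ultrafilter on `X`: a `Z_𝒜`-filter maximal with respect to
inclusion among all `Z_𝒜`-filters on `X`. -/
def IsZUltrafilter {X : Type*} [MeasurableSpace X] (F : Set (Set X)) : Prop :=
  IsZFilter F ∧ ∀ G : Set (Set X), IsZFilter G → F ⊆ G → G = F

/-- `(X, 𝒜)` is a compact measurable space: every cover of `X` by measurable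
sets admits a finite subcover. -/
def IsCompactMS (X : Type*) [MeasurableSpace X] : Prop :=
  ∀ B : Set (Set X), (∀ A ∈ B, MeasurableSet A) → ⋃₀ B = Set.univ →
    ∃ A : Set (Set X), A ⊆ B ∧ A.Finite ∧ ⋃₀ A = Set.univ

namespace Aux14
variable {X : Type*} [MeasurableSpace X]

variable {X : Type*} [MeasurableSpace X]

lemma zset_measurable (f : Mring X) : MeasurableSet (zset f) :=
  f.prop (measurableSet_singleton 0)

lemma zset_zero : zset (0 : Mring X) = univ := by
  ext x; simp [zset]


lemma zset_one : zset (1 : Mring X) = ∅ := by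
  ext x; simp [zset]

lemma zset_mul (f g : Mring X) : zset (f * g) = zset f ∪ zset g := by
  ext x; simp only [zset, mem_setOf_eq, mem_union]
  show (f : X → ℝ) x * (g : X → ℝ) x = 0 ↔ _
  exact mul_eq_zero

lemma zset_sq (f g : Mring X) : zset (f * f + g * g) = zset f ∩ zset g := by
  ext x; simp only [zset, mem_setOf_eq, mem_inter_iff]
  show (f : X → ℝ) x * (f : X → ℝ) x + (g : X → ℝ) x * (g : X → ℝ) x = 0 ↔ _
  rw [add_eq_zero_iff_of_nonneg (mul_self_nonneg _) (mul_self_nonneg _),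
    mul_self_eq_zero, mul_self_eq_zero]

lemma zset_smul (c f : Mring X) : zset f ⊆ zset (c • f) := by
  intro x hx
  show (c : X → ℝ) x * (f : X → ℝ) x = 0
  rw [hx]; ring

lemma isUnit_of_zset_empty {f : Mring X} (h : zset f = ∅) : IsUnit f := by
  have hne : ∀ x, (f : X → ℝ) x ≠ 0 := by
    intro x hx
    have hxz : x ∈ zset f := hx
    rw [h] at hxz
    exact hxz
  refine IsUnit.of_mul_eq_one (a := f) ⟨fun x => ((f : X → ℝ) x)⁻¹, f.prop.inv⟩ ?_
  ext x
  exact mul_inv_cancel₀ (hne x)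

noncomputable def chi (A : Set X) (hA : MeasurableSet A) : Mring X :=
  ⟨A.indicator 1, measurable_one.indicator hA⟩

lemma zset_chi (A : Set X) (hA : MeasurableSet A) : zset (chi A hA) = Aᶜ := by
  ext x
  simp only [zset, chi, mem_setOf_eq, mem_compl_iff]
  by_cases hx : x ∈ A <;> simp [Set.indicator_apply, hx]

/-- The ideal of functions whose zero set lies in the `Z`-filter `F`. -/
def filterIdeal (F : Set (Set X)) (hF : IsZFilter F) : Ideal (Mring X) where
  carrier := {f | zset f ∈ F}
  zero_mem' := by
    obtain ⟨A, hA⟩ := hF.1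
    rw [Set.mem_setOf_eq, zset_zero]
    exact hF.2.2.2.2 A hA univ MeasurableSet.univ (subset_univ A)
  add_mem' := by
    intro f g hf hg
    refine hF.2.2.2.2 _ (hF.2.2.2.1 _ hf _ hg) _ (zset_measurable _) ?_
    intro x hx
    show (f : X → ℝ) x + (g : X → ℝ) x = 0
    rw [hx.1, hx.2, add_zero]
  smul_mem' := by
    intro c f hf
    exact hF.2.2.2.2 _ hf _ (zset_measurable _) (zset_smul c f)

lemma filterIdeal_ne_top (F : Set (Set X)) (hF : IsZFilter F) :
    filterIdeal F hF ≠ ⊤ := by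
  intro h
  have : (1 : Mring X) ∈ filterIdeal F hF := h ▸ Submodule.mem_top
  rw [filterIdeal, Submodule.mem_mk, AddSubmonoid.mem_mk, AddSubsemigroup.mem_mk,
    Set.mem_setOf_eq, zset_one] at this
  exact hF.2.2.1 this

lemma mem_filterIdeal {F : Set (Set X)} {hF : IsZFilter F} {f : Mring X} :
    f ∈ filterIdeal F hF ↔ zset f ∈ F := Iff.rfl


lemma sInter_mem_of_finite {F : Set (Set X)} (hF : IsZFilter F) {S : Set (Set X)}
    (hfin : S.Finite) : S ⊆ F → S.Nonempty → ⋂₀ S ∈ F := by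
  refine Set.Finite.induction_on (motive := fun S _ => S ⊆ F → S.Nonempty → ⋂₀ S ∈ F) S hfin (fun _ h => absurd rfl h.ne_empty) ?_
  intro a s ha hs ih hsub hne
  rw [Set.sInter_insert]
  rcases s.eq_empty_or_nonempty with rfl | hsne
  · simpa using hsub (mem_insert a ∅)
  · exact hF.2.2.2.1 a (hsub (mem_insert _ _)) _
      (ih (fun x hx => hsub (mem_insert_of_mem _ hx)) hsne)

end Aux14

open Aux14 in
/-- The following are equivalent: (1) `(X, 𝒜)` is compact; (2) every proper
ideal of `M(X)` is fixed; (3) every maximal ideal of `M(X)` is fixed;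
(4) every `Z_𝒜`-filter on `X` is fixed; (5) every `Z_𝒜`-ultrafilter on `X`
is fixed. -/

theorem stmt_14 {X : Type*} [MeasurableSpace X] :
    List.TFAE
      [IsCompactMS X,
       ∀ I : Ideal (Mring X), I ≠ ⊤ → (⋂ f ∈ I, zset f).Nonempty,
       ∀ M : Ideal (Mring X), M.IsMaximal → (⋂ f ∈ M, zset f).Nonempty,
       ∀ F : Set (Set X), IsZFilter F → (⋂₀ F).Nonempty,
       ∀ F : Set (Set X), IsZUltrafilter F → (⋂₀ F).Nonempty] := by
  tfae_have 1 → 4 := by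
    intro h1 F hF
    by_contra hne
    rw [Set.not_nonempty_iff_eq_empty] at hne
    obtain ⟨A, hAsub, hAfin, hAuniv⟩ := h1 (compl '' F)
      (by rintro _ ⟨S, hS, rfl⟩; exact (hF.2.1 S hS).compl)
      (by rw [← compl_sInter, hne, compl_empty])
    have hF'sub : compl '' A ⊆ F := by
      rintro _ ⟨a, ha, rfl⟩
      obtain ⟨S, hS, rfl⟩ := hAsub ha
      rwa [compl_compl]
    have hF'int : ⋂₀ (compl '' A) = ∅ := by
      rw [← compl_sUnion, hAuniv, compl_univ]
    rcases A.eq_empty_or_nonempty with rfl | hAne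
    · simp only [sUnion_empty] at hAuniv
      obtain ⟨S, hS⟩ := hF.1
      have : S = ∅ := by
        rw [eq_empty_iff_forall_notMem]
        intro x _
        exact absurd (mem_univ x) (by rw [← hAuniv]; exact notMem_empty x)
      exact hF.2.2.1 (this ▸ hS)
    · have := sInter_mem_of_finite hF (hAfin.image compl) hF'sub (hAne.image compl)
      rw [hF'int] at this
      exact hF.2.2.1 this
  tfae_have 4 → 1 := by
    intro h4 B hB hcov
    by_contra hnc
    push_neg at hnc
    set G := {S : Set X | MeasurableSet S ∧
      ∃ A : Set (Set X), A ⊆ B ∧ A.Finite ∧ (⋃₀ A)ᶜ ⊆ S} with hGdef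
    have hG : IsZFilter G := by
      refine ⟨⟨univ, MeasurableSet.univ, ∅, empty_subset _, finite_empty, subset_univ _⟩,
        fun A hA => hA.1, ?_, ?_, ?_⟩
      · rintro ⟨-, A, hAB, hAfin, hsub⟩
        refine hnc A hAB hAfin ?_
        rw [← compl_empty_iff]
        exact eq_empty_of_subset_empty hsub
      · rintro S ⟨hSm, A1, hA1B, hA1f, hs1⟩ T ⟨hTm, A2, hA2B, hA2f, hs2⟩
        refine ⟨hSm.inter hTm, A1 ∪ A2, union_subset hA1B hA2B, hA1f.union hA2f, ?_⟩
        rw [sUnion_union, compl_union]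
        exact inter_subset_inter hs1 hs2
      · rintro S ⟨hSm, A1, hA1B, hA1f, hs1⟩ T hTm hST
        exact ⟨hTm, A1, hA1B, hA1f, hs1.trans hST⟩
    obtain ⟨x, hx⟩ := h4 G hG
    have hxuniv : x ∈ ⋃₀ B := hcov ▸ mem_univ x
    obtain ⟨T, hT, hxT⟩ := hxuniv
    have : Tᶜ ∈ G := ⟨(hB T hT).compl, {T}, singleton_subset_iff.mpr hT,
      finite_singleton T, by rw [sUnion_singleton]⟩
    exact hx Tᶜ this hxT
  tfae_have 4 → 2 := by
    intro h4 I hI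
    set F := {A : Set X | MeasurableSet A ∧ ∃ f ∈ I, zset f ⊆ A} with hFdef
    have hF : IsZFilter F := by
      refine ⟨⟨univ, MeasurableSet.univ, 0, I.zero_mem, subset_univ _⟩,
        fun A hA => hA.1, ?_, ?_, ?_⟩
      · rintro ⟨-, f, hf, hsub⟩
        exact hI (Ideal.eq_top_of_isUnit_mem I hf
          (isUnit_of_zset_empty (subset_empty_iff.mp hsub)))
      · rintro A ⟨hAm, f, hf, hfA⟩ B ⟨hBm, g, hg, hgB⟩
        refine ⟨hAm.inter hBm, f * f + g * g,
          I.add_mem (I.mul_mem_left f hf) (I.mul_mem_left g hg), ?_⟩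
        rw [zset_sq]
        exact inter_subset_inter hfA hgB
      · rintro A ⟨hAm, f, hf, hfA⟩ B hBm hAB
        exact ⟨hBm, f, hf, hfA.trans hAB⟩
    obtain ⟨x, hx⟩ := h4 F hF
    refine ⟨x, ?_⟩
    simp only [Set.mem_iInter]
    intro f hf
    exact hx (zset f) ⟨zset_measurable f, f, hf, subset_rfl⟩
  tfae_have 2 → 3 := fun h2 M hM => h2 M hM.ne_top
  tfae_have 3 → 4 := by
    intro h3 F hF
    obtain ⟨M, hMmax, hJM⟩ := Ideal.exists_le_maximal (filterIdeal F hF)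
      (filterIdeal_ne_top F hF)
    obtain ⟨x, hx⟩ := h3 M hMmax
    simp only [Set.mem_iInter] at hx
    refine ⟨x, fun A hA => ?_⟩
    have hAm : MeasurableSet A := hF.2.1 A hA
    have hchi : chi Aᶜ hAm.compl ∈ filterIdeal F hF := by
      rw [mem_filterIdeal, zset_chi, compl_compl]; exact hA
    have := hx _ (hJM hchi)
    rwa [zset_chi, compl_compl] at this
  tfae_have 4 → 5 := fun h4 F hF => h4 F hF.1
  tfae_have 5 → 3 := by
    intro h5 M hM
    set F := {A : Set X | ∃ f ∈ M, zset f = A} with hFdef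
    have hF : IsZFilter F := by
      refine ⟨⟨univ, 0, M.zero_mem, zset_zero⟩, ?_, ?_, ?_, ?_⟩
      · rintro A ⟨f, -, rfl⟩; exact zset_measurable f
      · rintro ⟨f, hf, hzf⟩
        exact hM.ne_top (Ideal.eq_top_of_isUnit_mem M hf (isUnit_of_zset_empty hzf))
      · rintro A ⟨f, hf, rfl⟩ B ⟨g, hg, rfl⟩
        exact ⟨f * f + g * g, M.add_mem (M.mul_mem_left f hf) (M.mul_mem_left g hg),
          zset_sq f g⟩
      · rintro A ⟨f, hf, rfl⟩ B hBm hAB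
        refine ⟨f * chi Bᶜ hBm.compl, M.mul_mem_right _ hf, ?_⟩
        rw [zset_mul, zset_chi, compl_compl]
        exact union_eq_self_of_subset_left hAB
    have hUF : IsZUltrafilter F := by
      refine ⟨hF, fun G hG hFG => ?_⟩
      have hMJ : M ≤ filterIdeal G hG := fun f hf => hFG ⟨f, hf, rfl⟩
      have hJM : filterIdeal G hG = M :=
        (hM.eq_of_le (filterIdeal_ne_top G hG) hMJ).symm
      refine Set.Subset.antisymm ?_ hFG
      intro A hA
      have hAm : MeasurableSet A := hG.2.1 A hA
      have hchi : chi Aᶜ hAm.compl ∈ filterIdeal G hG := by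
        rw [mem_filterIdeal, zset_chi, compl_compl]; exact hA
      rw [hJM] at hchi
      exact ⟨_, hchi, by rw [zset_chi, compl_compl]⟩
    obtain ⟨x, hx⟩ := h5 F hUF
    refine ⟨x, ?_⟩
    simp only [Set.mem_iInter]
    intro f hf
    exact hx (zset f) ⟨f, hf, rfl⟩
  tfae_finish
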